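/- There exist positive constants c₁, c₂ such that for all real a, b, c with a > b > 0, c > b, and the additional assumption that a < 2 whenever b < 1, one has c₁·(a^{5/2}/(b·(b+1)·c) + 1/(1+c)) ≤ ∫_0^∞ ((w+a)^{5/2}/((w+b)²·(w+c)))·e^{-w} dw ≤ c₂·(a^{5/2}/(b·(b+1)·c) + 1/(1+c)). -/

import Mathlib

open Real MeasureTheory Set Filter Topology

private lemma expNegInt : IntegrableOn (fun x : ℝ => Real.exp (-x)) (Set.Ioi (0:ℝ)) := by
  simpa using exp_neg_integrableOn_Ioi (0:ℝ) zero_lt_one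

private lemma invSqDeriv {b : ℝ} (hb : 0 < b) :
    ∀ x ∈ Set.Ici (0:ℝ), HasDerivAt (fun w : ℝ => -(w + b)⁻¹) (((x + b) ^ 2)⁻¹) x := by
  intro x hx
  have hx0 : (0:ℝ) ≤ x := hx
  have hxb : x + b ≠ 0 := by positivity
  have h1 : HasDerivAt (fun w : ℝ => w + b) 1 x := (hasDerivAt_id x).add_const b
  have h2 := (h1.inv hxb).neg
  rw [show ((x + b) ^ 2)⁻¹ = -(-1 / (x + b) ^ 2) by ring]
  exact h2

private lemma invSqTendsto (b : ℝ) :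
    Tendsto (fun w : ℝ => -(w + b)⁻¹) atTop (𝓝 0) := by
  have h1 : Tendsto (fun w : ℝ => w + b) atTop atTop :=
    tendsto_atTop_add_const_right _ b tendsto_id
  simpa using (tendsto_inv_atTop_zero.comp h1).neg

private lemma invSqIntegral {b : ℝ} (hb : 0 < b) :
    ∫ w in Set.Ioi (0:ℝ), ((w + b) ^ 2)⁻¹ = b⁻¹ := by
  have h := integral_Ioi_of_hasDerivAt_of_nonneg' (invSqDeriv hb)
    (fun x hx => by positivity) (invSqTendsto b)
  simpa using h

private lemma invSqIntegrable {b : ℝ} (hb : 0 < b) :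
    IntegrableOn (fun w : ℝ => ((w + b) ^ 2)⁻¹) (Set.Ioi (0:ℝ)) :=
  integrableOn_Ioi_deriv_of_nonneg' (invSqDeriv hb) (fun x _ => by positivity) (invSqTendsto b)

private lemma sqrtPiLe : Real.sqrt π ≤ 2 := by
  rw [show (2:ℝ) = Real.sqrt 4 by
    rw [show (4:ℝ) = 2 ^ 2 by norm_num, Real.sqrt_sq (by norm_num : (0:ℝ) ≤ 2)]]
  exact Real.sqrt_le_sqrt (by linarith [Real.pi_le_four])

private lemma gammaHalfIntegral :
    ∫ x in Set.Ioi (0:ℝ), Real.exp (-x) * x ^ (-(1:ℝ)/2) ≤ 2 := by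
  have h := Real.Gamma_eq_integral (by norm_num : (0:ℝ) < 1/2)
  rw [Real.Gamma_one_half_eq] at h
  norm_num at h ⊢
  rw [← h]
  exact sqrtPiLe

private lemma gammaHalfIntegrable :
    IntegrableOn (fun x : ℝ => Real.exp (-x) * x ^ (-(1:ℝ)/2)) (Set.Ioi (0:ℝ)) := by
  have h := Real.GammaIntegral_convergent (by norm_num : (0:ℝ) < 1/2)
  norm_num at h ⊢
  exact h

private lemma gamma32Integral :
    ∫ x in Set.Ioi (0:ℝ), Real.exp (-x) * x ^ ((1:ℝ)/2) ≤ 1 := by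
  have h := Real.Gamma_eq_integral (by norm_num : (0:ℝ) < 3/2)
  have h2 : Real.Gamma ((3:ℝ)/2) = 1/2 * Real.Gamma (1/2) := by
    rw [show (3:ℝ)/2 = 1/2 + 1 by norm_num, Real.Gamma_add_one (by norm_num)]
  rw [h2, Real.Gamma_one_half_eq] at h
  norm_num at h ⊢
  rw [← h]
  nlinarith [sqrtPiLe, Real.sqrt_nonneg π]

private lemma gamma32Integrable :
    IntegrableOn (fun x : ℝ => Real.exp (-x) * x ^ ((1:ℝ)/2)) (Set.Ioi (0:ℝ)) := by
  have h := Real.GammaIntegral_convergent (by norm_num : (0:ℝ) < 3/2)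
  norm_num at h ⊢
  exact h

private lemma exp252le : (2:ℝ) ^ ((5:ℝ)/2) ≤ 8 := by
  calc (2:ℝ) ^ ((5:ℝ)/2) ≤ (2:ℝ) ^ (3:ℝ) :=
        Real.rpow_le_rpow_of_exponent_le one_le_two (by norm_num)
    _ = 8 := by
        rw [show ((3:ℝ)) = ((3:ℕ):ℝ) by norm_num, Real.rpow_natCast]; norm_num

set_option maxHeartbeats 1000000 in
theorem stmt2 :
    ∃ c₁ c₂ : ℝ, 0 < c₁ ∧ 0 < c₂ ∧
      ∀ a b c : ℝ, 0 < b → b < a → b < c → (b < 1 → a < 2) →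
        c₁ * (a ^ ((5:ℝ)/2) / (b * (b + 1) * c) + 1 / (1 + c)) ≤
          (∫ w in Set.Ioi (0:ℝ), ((w + a) ^ ((5:ℝ)/2) / ((w + b) ^ 2 * (w + c))) * Real.exp (-w)) ∧
        (∫ w in Set.Ioi (0:ℝ), ((w + a) ^ ((5:ℝ)/2) / ((w + b) ^ 2 * (w + c))) * Real.exp (-w)) ≤
          c₂ * (a ^ ((5:ℝ)/2) / (b * (b + 1) * c) + 1 / (1 + c)) := by
  refine ⟨1/324, 32, by norm_num, by norm_num, ?_⟩
  intro a b c hb hba hbc _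
  have ha : 0 < a := hb.trans hba
  have hc : 0 < c := hb.trans hbc
  have h1c : (0:ℝ) < 1 + c := by linarith
  set f : ℝ → ℝ := fun w => ((w + a) ^ ((5:ℝ)/2) / ((w + b) ^ 2 * (w + c))) * Real.exp (-w)
    with hfdef
  set A : ℝ := a ^ ((5:ℝ)/2) / (b * (b + 1) * c) with hAdef
  set B : ℝ := 1 / (1 + c) with hBdef
  have hA : 0 < A := by rw [hAdef]; positivity
  have hB : 0 < B := by rw [hBdef]; positivity
  set h₁ : ℝ → ℝ := fun w => Real.exp (-w) / ((w + b) ^ 2 * (w + c)) with h1def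
  set h₂ : ℝ → ℝ := fun w => w ^ ((1:ℝ)/2) * Real.exp (-w) / (w + c) with h2def
  set p : ℝ := (2:ℝ) ^ ((5:ℝ)/2) with hpdef
  have hp0 : 0 < p := by rw [hpdef]; positivity
  have hq0 : 0 ≤ a ^ ((5:ℝ)/2) := Real.rpow_nonneg ha.le _
  -- measurability
  have hfmeas : Measurable f := by
    apply Measurable.mul
    · apply Measurable.div
      · exact ((continuous_id.add continuous_const).rpow_const
          (fun x => Or.inr (by norm_num))).measurable
      · exact ((measurable_id.add_const b).pow_const 2).mul (measurable_id.add_const c)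
    · exact measurable_id.neg.exp
  have h1meas : Measurable h₁ := by
    apply Measurable.div
    · exact measurable_id.neg.exp
    · exact ((measurable_id.add_const b).pow_const 2).mul (measurable_id.add_const c)
  have h2meas : Measurable h₂ := by
    apply Measurable.div
    · exact ((continuous_id.rpow_const (fun x => Or.inr (by norm_num))).measurable).mul
        measurable_id.neg.exp
    · exact measurable_id.add_const c
  -- nonnegativity of h₁, h₂ on positive reals
  have h1nn : ∀ w : ℝ, 0 < w → 0 ≤ h₁ w := by
    intro w hw
    simp only [h1def]
    have : (0:ℝ) < w + c := by linarith
    positivity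
  have h2nn : ∀ w : ℝ, 0 < w → 0 ≤ h₂ w := by
    intro w hw
    simp only [h2def]
    have : (0:ℝ) < w + c := by linarith
    positivity
  have hfnn : ∀ w : ℝ, 0 < w → 0 ≤ f w := by
    intro w hw
    simp only [hfdef]
    have h1 : (0:ℝ) < w + a := by linarith
    have h2 : (0:ℝ) < w + c := by linarith
    have h3 : (0:ℝ) < w + b := by linarith
    positivity
  have hf_nonneg : 0 ≤ᵐ[volume.restrict (Set.Ioi (0:ℝ))] f := by
    filter_upwards [ae_restrict_mem measurableSet_Ioi] with w hw
    exact hfnn w hw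
  -- integrability of h₁
  have hbd1 : ∀ w : ℝ, 0 < w → h₁ w ≤ (b^2*c)⁻¹ * Real.exp (-w) := by
    intro w hw
    simp only [h1def]
    have hd : (0:ℝ) < b^2*c := by positivity
    have e1 : b^2 ≤ (w+b)^2 := by nlinarith
    have hle : b^2*c ≤ (w+b)^2*(w+c) :=
      mul_le_mul e1 (by linarith) hc.le (by positivity)
    calc Real.exp (-w) / ((w + b) ^ 2 * (w + c)) ≤ Real.exp (-w) / (b^2*c) := by
          apply div_le_div_of_nonneg_left (Real.exp_pos _).le hd hle
      _ = (b^2*c)⁻¹ * Real.exp (-w) := by ring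
  have hint₁ : IntegrableOn h₁ (Set.Ioi (0:ℝ)) := by
    refine Integrable.mono (expNegInt.const_mul ((b^2*c)⁻¹)) h1meas.aestronglyMeasurable ?_
    filter_upwards [ae_restrict_mem measurableSet_Ioi] with w hw
    rw [Real.norm_eq_abs, Real.norm_eq_abs, abs_of_nonneg (h1nn w hw), abs_of_nonneg (by
      positivity)]
    exact hbd1 w hw
  -- integrability of h₂
  have hbd2 : ∀ w : ℝ, 0 < w → h₂ w ≤ c⁻¹ * (Real.exp (-w) * w ^ ((1:ℝ)/2)) := by
    intro w hw
    simp only [h2def]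
    have hn : (0:ℝ) ≤ w ^ ((1:ℝ)/2) * Real.exp (-w) := by positivity
    calc w ^ ((1:ℝ)/2) * Real.exp (-w) / (w + c)
        ≤ w ^ ((1:ℝ)/2) * Real.exp (-w) / c := by
          apply div_le_div_of_nonneg_left hn hc (by linarith)
      _ = c⁻¹ * (Real.exp (-w) * w ^ ((1:ℝ)/2)) := by ring
  have hint₂ : IntegrableOn h₂ (Set.Ioi (0:ℝ)) := by
    refine Integrable.mono (gamma32Integrable.const_mul c⁻¹) h2meas.aestronglyMeasurable ?_
    filter_upwards [ae_restrict_mem measurableSet_Ioi] with w hw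
    have hwn : (0:ℝ) ≤ w ^ ((1:ℝ)/2) := Real.rpow_nonneg hw.le _
    rw [Real.norm_eq_abs, Real.norm_eq_abs, abs_of_nonneg (h2nn w hw), abs_of_nonneg (by
      positivity)]
    exact hbd2 w hw
  -- the dominating function
  have hG : IntegrableOn (fun w => p * a ^ ((5:ℝ)/2) * h₁ w + p * h₂ w) (Set.Ioi (0:ℝ)) :=
    (hint₁.const_mul _).add (hint₂.const_mul _)
  -- pointwise bound
  have hpoint : ∀ w : ℝ, 0 < w → f w ≤ p * a ^ ((5:ℝ)/2) * h₁ w + p * h₂ w := by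
    intro w hw
    have hwa : (0:ℝ) < w + a := by linarith
    have hwb : (0:ℝ) < w + b := by linarith
    have hwc : (0:ℝ) < w + c := by linarith
    have hD : (0:ℝ) < (w+b)^2*(w+c) := by positivity
    have key1 : (w+a) ^ ((5:ℝ)/2) ≤ p * (w ^ ((5:ℝ)/2) + a ^ ((5:ℝ)/2)) := by
      have h0 : (0:ℝ) ≤ max w a := le_max_of_le_left hw.le
      have hm : w + a ≤ 2 * max w a := by
        rcases le_total w a with h | h
        · rw [max_eq_right h]; linarith
        · rw [max_eq_left h]; linarith
      calc (w+a) ^ ((5:ℝ)/2) ≤ (2 * max w a) ^ ((5:ℝ)/2) :=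
            Real.rpow_le_rpow (by linarith) hm (by norm_num)
        _ = p * (max w a) ^ ((5:ℝ)/2) := Real.mul_rpow (by norm_num) h0
        _ ≤ p * (w ^ ((5:ℝ)/2) + a ^ ((5:ℝ)/2)) := by
            apply mul_le_mul_of_nonneg_left _ hp0.le
            rcases max_cases w a with ⟨he, _⟩ | ⟨he, _⟩ <;> rw [he]
            · nlinarith [Real.rpow_nonneg ha.le ((5:ℝ)/2)]
            · nlinarith [Real.rpow_nonneg hw.le ((5:ℝ)/2)]
    have key2 : w ^ ((5:ℝ)/2) / ((w+b)^2*(w+c)) ≤ w ^ ((1:ℝ)/2) / (w+c) := by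
      have hsplit : w ^ ((5:ℝ)/2) = w ^ ((1:ℝ)/2) * w ^ 2 := by
        rw [← Real.rpow_natCast w 2, ← Real.rpow_add hw]
        norm_num
      rw [hsplit, div_le_div_iff₀ hD hwc]
      have h1 : w^2 ≤ (w+b)^2 := by nlinarith
      have h2 : (0:ℝ) ≤ w ^ ((1:ℝ)/2) := Real.rpow_nonneg hw.le _
      have h3 : w^2*(w+c) ≤ (w+b)^2*(w+c) := mul_le_mul_of_nonneg_right h1 hwc.le
      calc w ^ ((1:ℝ)/2) * w ^ 2 * (w + c) = w ^ ((1:ℝ)/2) * (w^2*(w+c)) := by ring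
        _ ≤ w ^ ((1:ℝ)/2) * ((w+b)^2*(w+c)) := mul_le_mul_of_nonneg_left h3 h2
    have hfw : f w = (w+a) ^ ((5:ℝ)/2) * (Real.exp (-w) / ((w+b)^2*(w+c))) := by
      simp only [hfdef]; ring
    calc f w = (w+a) ^ ((5:ℝ)/2) * (Real.exp (-w) / ((w+b)^2*(w+c))) := hfw
      _ ≤ (p * (w ^ ((5:ℝ)/2) + a ^ ((5:ℝ)/2))) * (Real.exp (-w) / ((w+b)^2*(w+c))) := by
          apply mul_le_mul_of_nonneg_right key1 (by positivity)
      _ = p * a ^ ((5:ℝ)/2) * h₁ w + p * (w ^ ((5:ℝ)/2) / ((w+b)^2*(w+c)) * Real.exp (-w)) := by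
          simp only [h1def]; ring
      _ ≤ p * a ^ ((5:ℝ)/2) * h₁ w + p * (w ^ ((1:ℝ)/2) / (w+c) * Real.exp (-w)) := by
          apply add_le_add le_rfl
          apply mul_le_mul_of_nonneg_left _ hp0.le
          exact mul_le_mul_of_nonneg_right key2 (Real.exp_pos _).le
      _ = p * a ^ ((5:ℝ)/2) * h₁ w + p * h₂ w := by simp only [h2def]; ring
  -- integrability of f
  have hf_int : IntegrableOn f (Set.Ioi (0:ℝ)) := by
    refine Integrable.mono hG hfmeas.aestronglyMeasurable ?_
    filter_upwards [ae_restrict_mem measurableSet_Ioi] with w hw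
    have hGnn : 0 ≤ p * a ^ ((5:ℝ)/2) * h₁ w + p * h₂ w := by
      have := h1nn w hw; have := h2nn w hw; positivity
    rw [Real.norm_eq_abs, Real.norm_eq_abs, abs_of_nonneg (hfnn w hw), abs_of_nonneg hGnn]
    exact hpoint w hw
  constructor
  · -- LOWER BOUND
    have hIA : A / 24 ≤ ∫ w in Set.Ioi (0:ℝ), f w := by
      set m : ℝ := min b 1 with hmdef
      have hm0 : 0 < m := lt_min hb one_pos
      have hm1 : m ≤ 1 := min_le_right _ _
      have hmb : m ≤ b := min_le_left _ _
      set C₁ : ℝ := a ^ ((5:ℝ)/2) * Real.exp (-1) / ((m+b)^2 * (m+c)) with hC1def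
      have hDm : (0:ℝ) < (m+b)^2*(m+c) := by positivity
      have hpt : ∀ x ∈ Set.Ioc (0:ℝ) m, C₁ ≤ f x := by
        intro x hx
        obtain ⟨hx0, hxm⟩ := hx
        have hfx : f x = (x+a) ^ ((5:ℝ)/2) * Real.exp (-x) / ((x+b)^2*(x+c)) := by
          simp only [hfdef]; ring
        rw [hfx, hC1def]
        apply div_le_div₀ (by positivity) ?_ (by positivity) ?_
        · apply mul_le_mul
          · exact Real.rpow_le_rpow ha.le (by linarith) (by norm_num)
          · exact Real.exp_le_exp.2 (by linarith)
          · exact (Real.exp_pos _).le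
          · exact Real.rpow_nonneg (by linarith) _
        · have e1 : x + b ≤ m + b := by linarith
          have e2 : x + c ≤ m + c := by linarith
          have e3 : (0:ℝ) ≤ x + b := by linarith
          have e4 : (0:ℝ) ≤ x + c := by linarith
          exact mul_le_mul (pow_le_pow_left₀ e3 e1 2) e2 e4 (by positivity)
      have hmeasIoc : (volume (Set.Ioc (0:ℝ) m)).toReal = m := by
        rw [Real.volume_Ioc, ENNReal.toReal_ofReal (by linarith)]; ring
      have hlow : C₁ * m ≤ ∫ x in Set.Ioc (0:ℝ) m, f x := by
        have h := setIntegral_ge_of_const_le_real measurableSet_Ioc (measure_Ioc_lt_top).ne hpt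
          (hf_int.mono_set Set.Ioc_subset_Ioi_self)
        rwa [show volume.real (Set.Ioc (0:ℝ) m) = m from hmeasIoc] at h
      have hsub : ∫ x in Set.Ioc (0:ℝ) m, f x ≤ ∫ w in Set.Ioi (0:ℝ), f w :=
        setIntegral_mono_set hf_int hf_nonneg
          (HasSubset.Subset.eventuallyLE Set.Ioc_subset_Ioi_self)
      have key : (m+b)^2*(m+c) ≤ 8*m*(b*(b+1)*c) := by
        rcases le_total b 1 with hb1 | hb1
        · have hmeq : m = b := min_eq_left hb1
          rw [hmeq]
          nlinarith [sq_nonneg b, mul_pos hb hc, mul_pos (mul_pos hb hb) hc,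
            mul_pos (mul_pos hb hb) (sub_pos.2 hbc)]
        · have hmeq : m = 1 := min_eq_right hb1
          rw [hmeq]
          have hc1 : (1:ℝ) ≤ c := by linarith
          nlinarith [mul_pos hb hc, sq_nonneg (b-1), sq_nonneg (c-1),
            mul_pos (mul_pos hb hb) hc]
      have hexp1 : (1:ℝ)/3 ≤ Real.exp (-1) := by
        rw [Real.exp_neg]
        have h3 : Real.exp 1 ≤ 3 := by linarith [Real.exp_one_lt_d9]
        calc (1:ℝ)/3 = 3⁻¹ := by norm_num
          _ ≤ (Real.exp 1)⁻¹ := inv_anti₀ (Real.exp_pos 1) h3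
      have hE : (0:ℝ) < b*(b+1)*c := by positivity
      have hstep : A / 24 ≤ C₁ * m := by
        have hfrac : (1:ℝ)/8 * (1/(b*(b+1)*c)) ≤ m / ((m+b)^2*(m+c)) := by
          rw [div_mul_div_comm, one_mul, div_le_div_iff₀ (by positivity) hDm]
          nlinarith [key]
        have hmul : (1/3) * ((1:ℝ)/8 * (1/(b*(b+1)*c))) ≤
            Real.exp (-1) * (m / ((m+b)^2*(m+c))) :=
          mul_le_mul hexp1 hfrac (by positivity) (Real.exp_pos _).le
        have hmul2 := mul_le_mul_of_nonneg_left hmul hq0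
        have e1 : a ^ ((5:ℝ)/2) * ((1/3) * ((1:ℝ)/8 * (1/(b*(b+1)*c)))) = A / 24 := by
          rw [hAdef]; ring
        have e2 : a ^ ((5:ℝ)/2) * (Real.exp (-1) * (m / ((m+b)^2*(m+c)))) = C₁ * m := by
          rw [hC1def]; ring
        rw [e1, e2] at hmul2
        exact hmul2
      linarith
    rcases le_total b 1 with hb1 | hb1
    · -- b ≤ 1 : also B/162 ≤ ∫ f
      have hIB : B / 162 ≤ ∫ w in Set.Ioi (0:ℝ), f w := by
        set C₂ : ℝ := Real.exp (-2) / ((2+b)^2 * (2+c)) with hC2def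
        have hD2 : (0:ℝ) < (2+b)^2*(2+c) := by positivity
        have hpt : ∀ x ∈ Set.Ioc (1:ℝ) 2, C₂ ≤ f x := by
          intro x hx
          obtain ⟨hx1, hx2⟩ := hx
          have hx0 : (0:ℝ) < x := by linarith
          have hfx : f x = (x+a) ^ ((5:ℝ)/2) * Real.exp (-x) / ((x+b)^2*(x+c)) := by
            simp only [hfdef]; ring
          rw [hfx, hC2def]
          apply div_le_div₀ (by positivity) ?_ (by positivity) ?_
          · have h1 : (1:ℝ) ≤ (x+a) ^ ((5:ℝ)/2) := by
              have := Real.rpow_le_rpow (by norm_num : (0:ℝ) ≤ 1)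
                (by linarith : (1:ℝ) ≤ x + a) (by norm_num : (0:ℝ) ≤ (5:ℝ)/2)
              rwa [Real.one_rpow] at this
            have h2 : Real.exp (-2) ≤ Real.exp (-x) := Real.exp_le_exp.2 (by linarith)
            calc Real.exp (-2) = 1 * Real.exp (-2) := by ring
              _ ≤ (x+a) ^ ((5:ℝ)/2) * Real.exp (-x) :=
                  mul_le_mul h1 h2 (Real.exp_pos _).le (by linarith)
          · have e1 : x + b ≤ 2 + b := by linarith
            have e2 : x + c ≤ 2 + c := by linarith
            have e3 : (0:ℝ) ≤ x + b := by linarith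
            have e4 : (0:ℝ) ≤ x + c := by linarith
            exact mul_le_mul (pow_le_pow_left₀ e3 e1 2) e2 e4 (by positivity)
        have hmeasIoc : (volume (Set.Ioc (1:ℝ) 2)).toReal = 1 := by
          rw [Real.volume_Ioc]
          norm_num
        have hlow : C₂ * 1 ≤ ∫ x in Set.Ioc (1:ℝ) 2, f x := by
          have h := setIntegral_ge_of_const_le_real measurableSet_Ioc (measure_Ioc_lt_top).ne hpt
            (hf_int.mono_set (Set.Ioc_subset_Ioi_self.trans (Set.Ioi_subset_Ioi (by norm_num))))
          rwa [show volume.real (Set.Ioc (1:ℝ) 2) = 1 from hmeasIoc] at h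
        have hsub : ∫ x in Set.Ioc (1:ℝ) 2, f x ≤ ∫ w in Set.Ioi (0:ℝ), f w :=
          setIntegral_mono_set hf_int hf_nonneg
            (HasSubset.Subset.eventuallyLE
              (Set.Ioc_subset_Ioi_self.trans (Set.Ioi_subset_Ioi (by norm_num))))
        have hexp2 : (1:ℝ)/9 ≤ Real.exp (-2) := by
          rw [Real.exp_neg]
          have h9 : Real.exp 2 ≤ 9 := by
            rw [show (2:ℝ) = 1 + 1 by norm_num, Real.exp_add]
            nlinarith [Real.exp_one_lt_d9, Real.exp_pos 1]
          calc (1:ℝ)/9 = 9⁻¹ := by norm_num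
            _ ≤ (Real.exp 2)⁻¹ := inv_anti₀ (Real.exp_pos 2) h9
        have hstep : B / 162 ≤ C₂ := by
          have hq : B / 162 = 1 / ((1+c)*162) := by
            rw [hBdef, div_div]
          have e5 : (2+b)^2 ≤ 9 := by nlinarith
          have e6 : 2 + c ≤ 2*(1+c) := by linarith
          have e7 : (2+b)^2*(2+c) ≤ 18*(1+c) := by
            calc (2+b)^2 * (2+c) ≤ 9 * (2*(1+c)) :=
                  mul_le_mul e5 e6 (by linarith) (by norm_num)
              _ = 18*(1+c) := by ring
          have e8 : (1:ℝ)/9 * (162*(1+c)) ≤ Real.exp (-2) * (162*(1+c)) :=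
            mul_le_mul_of_nonneg_right hexp2 (by positivity)
          rw [hq, hC2def, div_le_div_iff₀ (by positivity) hD2]
          nlinarith [e7, e8]
        linarith
      linarith
    · -- 1 ≤ b : B ≤ 2A
      have ha1 : (1:ℝ) ≤ a := by linarith
      have hq2 : a ^ 2 ≤ a ^ ((5:ℝ)/2) := by
        have := Real.rpow_le_rpow_of_exponent_le ha1 (by norm_num : (2:ℝ) ≤ (5:ℝ)/2)
        rwa [show ((2:ℝ)) = ((2:ℕ):ℝ) by norm_num, Real.rpow_natCast] at this
      have hBA : B ≤ 2 * A := by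
        rw [hBdef, hAdef,
          show 2 * (a ^ ((5:ℝ)/2) / (b*(b+1)*c)) = (2*a ^ ((5:ℝ)/2)) / (b*(b+1)*c) by ring,
          div_le_div_iff₀ h1c (by positivity)]
        have e1 : b*(b+1) ≤ 2*a^2 := by nlinarith
        nlinarith [mul_le_mul_of_nonneg_right e1 hc.le,
          mul_le_mul_of_nonneg_right hq2 hc.le, mul_nonneg hq0 hc.le]
      linarith
  · -- UPPER BOUND
    have hIu : (∫ w in Set.Ioi (0:ℝ), f w)
        ≤ p * a ^ ((5:ℝ)/2) * (∫ w in Set.Ioi (0:ℝ), h₁ w)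
          + p * (∫ w in Set.Ioi (0:ℝ), h₂ w) := by
      have h := integral_mono_of_nonneg hf_nonneg hG (by
        filter_upwards [ae_restrict_mem measurableSet_Ioi] with w hw
        exact hpoint w hw)
      rwa [integral_add (hint₁.const_mul _) (hint₂.const_mul _),
        integral_const_mul, integral_const_mul] at h
    have hI1 : (∫ w in Set.Ioi (0:ℝ), h₁ w) ≤ 2 / (b*(b+1)*c) := by
      rcases le_total 1 b with hb1 | hb1
      · have hcmp : (∫ w in Set.Ioi (0:ℝ), h₁ w)
            ≤ ∫ w in Set.Ioi (0:ℝ), (b^2*c)⁻¹ * Real.exp (-w) := by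
          refine integral_mono_of_nonneg ?_ (expNegInt.const_mul _) ?_
          · filter_upwards [ae_restrict_mem measurableSet_Ioi] with w hw
            exact h1nn w hw
          · filter_upwards [ae_restrict_mem measurableSet_Ioi] with w hw
            exact hbd1 w hw
        rw [integral_const_mul, integral_exp_neg_Ioi_zero, mul_one] at hcmp
        have hle : (b^2*c)⁻¹ ≤ 2/(b*(b+1)*c) := by
          rw [inv_eq_one_div, div_le_div_iff₀ (by positivity) (by positivity)]
          nlinarith [mul_pos hb hc]
        linarith
      · have hcmp : (∫ w in Set.Ioi (0:ℝ), h₁ w)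
            ≤ ∫ w in Set.Ioi (0:ℝ), c⁻¹ * ((w+b)^2)⁻¹ := by
          refine integral_mono_of_nonneg ?_ ((invSqIntegrable hb).const_mul _) ?_
          · filter_upwards [ae_restrict_mem measurableSet_Ioi] with w hw
            exact h1nn w hw
          · filter_upwards [ae_restrict_mem measurableSet_Ioi] with w hw
            simp only [h1def]
            have hw0 : (0:ℝ) < w := hw
            have e3 : (0:ℝ) < w + b := by linarith
            have e4 : (0:ℝ) < w + c := by linarith
            have hle2 : (w+b)^2 * c ≤ (w+b)^2*(w+c) := by nlinarith [sq_nonneg (w+b)]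
            calc Real.exp (-w) / ((w + b) ^ 2 * (w + c))
                ≤ 1 / ((w + b) ^ 2 * c) := by
                  apply div_le_div₀ zero_le_one (Real.exp_le_one_iff.2 (by linarith))
                    (by positivity) hle2
              _ = c⁻¹ * ((w+b)^2)⁻¹ := by
                  rw [one_div, mul_inv, mul_comm]
        rw [integral_const_mul, invSqIntegral hb] at hcmp
        have hle : c⁻¹ * b⁻¹ ≤ 2/(b*(b+1)*c) := by
          have e0 : c⁻¹ * b⁻¹ = 1/(b*c) := by
            rw [one_div, mul_inv, mul_comm]
          rw [e0, div_le_div_iff₀ (by positivity) (by positivity)]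
          nlinarith [mul_pos hb hc]
        linarith
    have hI2 : (∫ w in Set.Ioi (0:ℝ), h₂ w) ≤ 4 / (1+c) := by
      rcases le_total 1 c with hc1 | hc1
      · have hcmp : (∫ w in Set.Ioi (0:ℝ), h₂ w)
            ≤ ∫ w in Set.Ioi (0:ℝ), c⁻¹ * (Real.exp (-w) * w ^ ((1:ℝ)/2)) := by
          refine integral_mono_of_nonneg ?_ (gamma32Integrable.const_mul _) ?_
          · filter_upwards [ae_restrict_mem measurableSet_Ioi] with w hw
            exact h2nn w hw
          · filter_upwards [ae_restrict_mem measurableSet_Ioi] with w hw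
            exact hbd2 w hw
        rw [integral_const_mul] at hcmp
        have h32 : c⁻¹ * (∫ x in Set.Ioi (0:ℝ), Real.exp (-x) * x ^ ((1:ℝ)/2)) ≤ c⁻¹ * 1 :=
          mul_le_mul_of_nonneg_left gamma32Integral (by positivity)
        have hce : c⁻¹ ≤ 4/(1+c) := by
          rw [inv_eq_one_div, div_le_div_iff₀ hc h1c]
          nlinarith
        linarith
      · have hcmp : (∫ w in Set.Ioi (0:ℝ), h₂ w)
            ≤ ∫ w in Set.Ioi (0:ℝ), Real.exp (-w) * w ^ (-(1:ℝ)/2) := by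
          refine integral_mono_of_nonneg ?_ gammaHalfIntegrable ?_
          · filter_upwards [ae_restrict_mem measurableSet_Ioi] with w hw
            exact h2nn w hw
          · filter_upwards [ae_restrict_mem measurableSet_Ioi] with w hw
            have hw0 : (0:ℝ) < w := hw
            simp only [h2def]
            have hkey : w ^ ((1:ℝ)/2) = w ^ (-(1:ℝ)/2) * w := by
              rw [show -(1:ℝ)/2 = (1:ℝ)/2 - 1 by norm_num, Real.rpow_sub hw0, Real.rpow_one]
              field_simp
            have hnn : (0:ℝ) ≤ w ^ (-(1:ℝ)/2) * Real.exp (-w) := by positivity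
            calc w ^ ((1:ℝ)/2) * Real.exp (-w) / (w + c)
                = (w ^ (-(1:ℝ)/2) * Real.exp (-w)) * (w / (w+c)) := by
                  rw [hkey]; ring
              _ ≤ (w ^ (-(1:ℝ)/2) * Real.exp (-w)) * 1 := by
                  apply mul_le_mul_of_nonneg_left _ hnn
                  rw [div_le_one (by linarith)]; linarith
              _ = Real.exp (-w) * w ^ (-(1:ℝ)/2) := by ring
        have hce : (2:ℝ) ≤ 4/(1+c) := by
          rw [le_div_iff₀ h1c]; linarith
        linarith [gammaHalfIntegral]
    have hIh1nn : 0 ≤ ∫ w in Set.Ioi (0:ℝ), h₁ w :=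
      setIntegral_nonneg measurableSet_Ioi (fun x hx => h1nn x hx)
    have hIh2nn : 0 ≤ ∫ w in Set.Ioi (0:ℝ), h₂ w :=
      setIntegral_nonneg measurableSet_Ioi (fun x hx => h2nn x hx)
    have h8 : p ≤ 8 := exp252le
    calc (∫ w in Set.Ioi (0:ℝ), f w)
        ≤ p * a ^ ((5:ℝ)/2) * (∫ w in Set.Ioi (0:ℝ), h₁ w)
          + p * (∫ w in Set.Ioi (0:ℝ), h₂ w) := hIu
      _ ≤ 8 * a ^ ((5:ℝ)/2) * (2/(b*(b+1)*c)) + 8 * (4/(1+c)) := by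
          apply add_le_add
          · calc p * a ^ ((5:ℝ)/2) * (∫ w in Set.Ioi (0:ℝ), h₁ w)
                ≤ 8 * a ^ ((5:ℝ)/2) * (∫ w in Set.Ioi (0:ℝ), h₁ w) :=
                  mul_le_mul_of_nonneg_right (mul_le_mul_of_nonneg_right h8 hq0) hIh1nn
              _ ≤ 8 * a ^ ((5:ℝ)/2) * (2/(b*(b+1)*c)) :=
                  mul_le_mul_of_nonneg_left hI1 (by positivity)
          · calc p * (∫ w in Set.Ioi (0:ℝ), h₂ w)
                ≤ 8 * (∫ w in Set.Ioi (0:ℝ), h₂ w) :=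
                  mul_le_mul_of_nonneg_right h8 hIh2nn
              _ ≤ 8 * (4/(1+c)) := mul_le_mul_of_nonneg_left hI2 (by norm_num)
      _ = 16*A + 32*B := by rw [hAdef, hBdef]; ring
      _ ≤ 32*(A+B) := by linarith
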